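/- Define the backward information recursion $\widehat\Omega_t = \Omega_t + C_t^T R_t^{-1} C_t$, $M_t = F_t^T \widehat\Omega_t F_t + I$, $\Omega_{t-1}' = A_t^T (I - \widehat\Omega_t F_t M_t^{-1} F_t^T) \widehat\Omega_t A_t$, where $\Omega_t$ is symmetric positive semidefinite, $R_t$ symmetric positive definite, and $A_t, C_t, F_t$ arbitrary matrices of compatible dimensions. Then $\Omega_{t-1}'$ is symmetric positive semidefinite. In particular, initializing with $\Omega_T = 0$, every $\Omega_t$ generated by the recursion is symmetric positive semidefinite. -/

import Mathlib

open Matrix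

open scoped MatrixOrder in
private lemma psd_key {n : ℕ} {W : Matrix (Fin n) (Fin n) ℝ} (F : Matrix (Fin n) (Fin n) ℝ)
    (hW : W.PosSemidef) :
    ((1 - W * F * (Fᵀ * W * F + 1)⁻¹ * Fᵀ) * W).PosSemidef := by
  set S := CFC.sqrt W with hSdef
  have hSS : S * S = W := CFC.sqrt_mul_sqrt_self W hW.nonneg
  have hSH : Sᴴ = S := (Matrix.nonneg_iff_posSemidef.mp (CFC.sqrt_nonneg W)).isHermitian
  have hST : Sᵀ = S := by rw [← conjTranspose_eq_transpose_of_trivial, hSH]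
  set B := S * F with hB
  have hBt : Bᵀ = Fᵀ * S := by rw [hB, transpose_mul, hST]
  have hBH : Bᴴ = Bᵀ := conjTranspose_eq_transpose_of_trivial B
  have hM : Fᵀ * W * F + 1 = Bᵀ * B + 1 := by
    rw [hBt, hB, ← hSS]; noncomm_ring [mul_assoc]
  have hMpd : (Bᵀ * B + 1).PosDef := by
    have h1 : (Bᵀ * B).PosSemidef := by
      rw [← hBH]; exact posSemidef_conjTranspose_mul_self B
    exact Matrix.PosDef.posSemidef_add h1 Matrix.PosDef.one
  have hNpd : (B * Bᵀ + 1).PosDef := by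
    have h1 : (B * Bᵀ).PosSemidef := by
      rw [← hBH]; exact posSemidef_self_mul_conjTranspose B
    exact Matrix.PosDef.posSemidef_add h1 Matrix.PosDef.one
  have hMinv : (Bᵀ * B + 1) * (Bᵀ * B + 1)⁻¹ = 1 :=
    Matrix.mul_nonsing_inv _ (isUnit_iff_ne_zero.mpr hMpd.det_pos.ne')
  -- key identity
  have hkey : (B * Bᵀ + 1) * (1 - B * (Bᵀ * B + 1)⁻¹ * Bᵀ) = 1 := by
    have hcomm : (B * Bᵀ + 1) * B = B * (Bᵀ * B + 1) := by noncomm_ring [mul_assoc]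
    calc (B * Bᵀ + 1) * (1 - B * (Bᵀ * B + 1)⁻¹ * Bᵀ)
        = (B * Bᵀ + 1) - ((B * Bᵀ + 1) * B) * (Bᵀ * B + 1)⁻¹ * Bᵀ := by noncomm_ring [mul_assoc]
      _ = (B * Bᵀ + 1) - B * ((Bᵀ * B + 1) * (Bᵀ * B + 1)⁻¹) * Bᵀ := by
          rw [hcomm]; noncomm_ring [mul_assoc]
      _ = 1 := by rw [hMinv]; noncomm_ring [mul_assoc]
  have hinv : (1 - B * (Bᵀ * B + 1)⁻¹ * Bᵀ) = (B * Bᵀ + 1)⁻¹ :=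
    (Matrix.inv_eq_right_inv hkey).symm
  have hexpr : (1 - W * F * (Fᵀ * W * F + 1)⁻¹ * Fᵀ) * W
      = Sᴴ * (B * Bᵀ + 1)⁻¹ * S := by
    rw [hSH, hM, ← hinv]
    have : W * F = S * B := by rw [hB, ← hSS]; noncomm_ring [mul_assoc]
    rw [sub_mul, one_mul, this, ← hSS]
    calc S * S - S * B * (Bᵀ * B + 1)⁻¹ * Fᵀ * (S * S)
        = S * S - S * (B * (Bᵀ * B + 1)⁻¹ * (Fᵀ * S)) * S := by noncomm_ring [mul_assoc]
      _ = S * (1 - B * (Bᵀ * B + 1)⁻¹ * Bᵀ) * S := by rw [← hBt]; noncomm_ring [mul_assoc]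
  rw [hexpr]
  exact hNpd.inv.posSemidef.conjTranspose_mul_mul_same S

private lemma psd_step {n p : ℕ} (Ω A F : Matrix (Fin n) (Fin n) ℝ)
    (C : Matrix (Fin p) (Fin n) ℝ) (R : Matrix (Fin p) (Fin p) ℝ)
    (hΩ : Ω.PosSemidef) (hR : R.PosDef) :
    (Aᵀ * (1 - (Ω + Cᵀ * R⁻¹ * C) * F * (Fᵀ * (Ω + Cᵀ * R⁻¹ * C) * F + 1)⁻¹ * Fᵀ) *
        (Ω + Cᵀ * R⁻¹ * C) * A).PosSemidef := by
  have hCH : Cᴴ = Cᵀ := conjTranspose_eq_transpose_of_trivial C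
  have hAH : Aᴴ = Aᵀ := conjTranspose_eq_transpose_of_trivial A
  have hW : (Ω + Cᵀ * R⁻¹ * C).PosSemidef := by
    refine hΩ.add ?_
    rw [← hCH]
    exact hR.inv.posSemidef.conjTranspose_mul_mul_same C
  have hmid := psd_key F hW
  have : Aᵀ * (1 - (Ω + Cᵀ * R⁻¹ * C) * F * (Fᵀ * (Ω + Cᵀ * R⁻¹ * C) * F + 1)⁻¹ * Fᵀ) *
        (Ω + Cᵀ * R⁻¹ * C) * A
      = Aᴴ * ((1 - (Ω + Cᵀ * R⁻¹ * C) * F * (Fᵀ * (Ω + Cᵀ * R⁻¹ * C) * F + 1)⁻¹ * Fᵀ) *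
        (Ω + Cᵀ * R⁻¹ * C)) * A := by rw [hAH]; noncomm_ring [mul_assoc]
  rw [this]
  exact hmid.conjTranspose_mul_mul_same A

open Matrix in
/-- The backward information-matrix recursion preserves positive semidefiniteness: with
`Ω̂ = Ω + Cᵀ R⁻¹ C`, `M = Fᵀ Ω̂ F + I`, the update
`Ω' = Aᵀ (I - Ω̂ F M⁻¹ Fᵀ) Ω̂ A` is symmetric positive semidefinite whenever `Ω` is
positive semidefinite and `R` positive definite.  In particular, initializing with
`Ω_T = 0`, every `Ω_t` generated by the recursion is symmetric positive semidefinite. -/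
theorem backward_information_recursion_psd (n p : ℕ) :
    (∀ (Ω A F : Matrix (Fin n) (Fin n) ℝ) (C : Matrix (Fin p) (Fin n) ℝ)
        (R : Matrix (Fin p) (Fin p) ℝ), Ω.PosSemidef → R.PosDef →
      (Aᵀ * (1 - (Ω + Cᵀ * R⁻¹ * C) * F * (Fᵀ * (Ω + Cᵀ * R⁻¹ * C) * F + 1)⁻¹ * Fᵀ) *
          (Ω + Cᵀ * R⁻¹ * C) * A).PosSemidef) ∧
    (∀ (T : ℕ) (Ω A F : ℕ → Matrix (Fin n) (Fin n) ℝ)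
        (C : ℕ → Matrix (Fin p) (Fin n) ℝ) (R : ℕ → Matrix (Fin p) (Fin p) ℝ),
      (∀ t, (R t).PosDef) → Ω T = 0 →
      (∀ t < T, Ω t =
        (A (t+1))ᵀ * (1 - (Ω (t+1) + (C (t+1))ᵀ * (R (t+1))⁻¹ * C (t+1)) * F (t+1) *
            ((F (t+1))ᵀ * (Ω (t+1) + (C (t+1))ᵀ * (R (t+1))⁻¹ * C (t+1)) * F (t+1) + 1)⁻¹ *
            (F (t+1))ᵀ) *
          (Ω (t+1) + (C (t+1))ᵀ * (R (t+1))⁻¹ * C (t+1)) * A (t+1)) →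
      ∀ t ≤ T, (Ω t).PosSemidef) := by
  constructor
  · exact fun Ω A F C R hΩ hR => psd_step Ω A F C R hΩ hR
  · intro T Ω A F C R hR hT hrec t ht
    have key : ∀ k t, t ≤ T → T - t = k → (Ω t).PosSemidef := by
      intro k
      induction k with
      | zero =>
        intro t ht h0
        have : t = T := by omega
        subst this
        rw [hT]
        exact Matrix.PosSemidef.zero
      | succ k ih =>
        intro t ht hk
        have htlt : t < T := by omega
        have hnext : (Ω (t+1)).PosSemidef := ih (t+1) (by omega) (by omega)
        rw [hrec t htlt]
        exact psd_step _ _ _ _ _ hnext (hR (t+1))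
    exact key (T - t) t ht rfl
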